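/- arXiv:2507.17545 — 3 statements merged into one kernel-verified Lean document; each statement's English description precedes it below -/
import Mathlib

section
/- For exact DCA iterates x_0, ..., x_{T+1} (where each x_{t+1} minimizes the surrogate h_t over P), the average of the DC gaps satisfies (1/(T+1)) Σ_{t=0}^T G(x_t) ≤ (φ(x_0) - φ(x*))/(T+1), where x* minimizes φ over P; in particular min_{0≤t≤T} G(x_t) = O(1/T). -/
open RealInnerProductSpace

lemma grad_convex_ineq {n : ℕ} (g : EuclideanSpace ℝ (Fin n) → ℝ)
    (hg : ConvexOn ℝ Set.univ g) (hgd : Differentiable ℝ g)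
    (a y : EuclideanSpace ℝ (Fin n)) :
    g a + ⟪gradient g a, y - a⟫ ≤ g y := by
  set ψ : ℝ → ℝ := fun t => g (a + t • (y - a)) with hψ
  have hconv : ConvexOn ℝ Set.univ ψ := by
    have h := hg.comp_affineMap (AffineMap.lineMap (k := ℝ) a y)
    have : ConvexOn ℝ Set.univ (g ∘ ⇑(AffineMap.lineMap (k := ℝ) a y)) := by simpa using h
    convert this using 1
    ext t
    simp [ψ, Function.comp, AffineMap.lineMap_apply, add_comm]
  have hgrad : HasGradientAt g (gradient g a) a := (hgd a).hasGradientAt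
  have hfd : HasFDerivAt g ((InnerProductSpace.toDual ℝ _) (gradient g a)) a := hgrad
  have hline : HasDerivAt (fun t : ℝ => a + t • (y - a)) (y - a) 0 := by
    simpa using ((hasDerivAt_id (0:ℝ)).smul_const (y - a)).const_add a
  have hd : HasDerivAt ψ ⟪gradient g a, y - a⟫ 0 := by
    have hfd' : HasFDerivAt g ((InnerProductSpace.toDual ℝ _) (gradient g a))
        ((fun t : ℝ => a + t • (y - a)) 0) := by simpa using hfd
    have := hfd'.comp_hasDerivAt 0 hline
    simpa [ψ, InnerProductSpace.toDual_apply_apply, Function.comp_def] using this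
  have hslope := hconv.le_slope_of_hasDerivAt (Set.mem_univ 0) (Set.mem_univ 1)
    zero_lt_one hd
  have h01 : slope ψ 0 1 = g y - g a := by
    simp [slope, ψ]
  rw [h01] at hslope
  linarith

/-- For exact DCA iterates, the average DC gap is at most `(φ(x₀) - φ(x*))/(T+1)`. -/
theorem stmt3 {n : ℕ} (P : Set (EuclideanSpace ℝ (Fin n)))
    (hPc : IsCompact P) (hPconv : Convex ℝ P)
    (f g : EuclideanSpace ℝ (Fin n) → ℝ)
    (hf : ConvexOn ℝ Set.univ f) (hfd : Differentiable ℝ f)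
    (hg : ConvexOn ℝ Set.univ g) (hgd : Differentiable ℝ g)
    (T : ℕ) (x : ℕ → EuclideanSpace ℝ (Fin n))
    (hxP : ∀ t ≤ T + 1, x t ∈ P)
    (φ : EuclideanSpace ℝ (Fin n) → ℝ)
    (hφ : ∀ y, φ y = f y - g y)
    (ht : ℕ → EuclideanSpace ℝ (Fin n) → ℝ)
    (hht : ∀ t y, ht t y = f y - g (x t) - ⟪gradient g (x t), y - x t⟫)
    (hmin : ∀ t ≤ T, ∀ y ∈ P, ht t (x (t + 1)) ≤ ht t y)
    (G : ℕ → ℝ)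
    (hG : ∀ t ≤ T, IsGreatest ((fun y => φ (x t) - ht t y) '' P) (G t))
    (xstar : EuclideanSpace ℝ (Fin n))
    (hstar : xstar ∈ P ∧ ∀ y ∈ P, φ xstar ≤ φ y) :
    (∑ t ∈ Finset.range (T + 1), G t) / (T + 1 : ℝ)
      ≤ (φ (x 0) - φ xstar) / (T + 1 : ℝ) ∧
    ∃ t ≤ T, G t ≤ (φ (x 0) - φ xstar) / (T + 1 : ℝ) := by
  -- key bound: G t ≤ φ (x t) - φ (x (t+1))
  have key : ∀ t ≤ T, G t ≤ φ (x t) - φ (x (t + 1)) := by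
    intro t hT
    obtain ⟨⟨y, hyP, hyG⟩, hub⟩ := hG t hT
    have h1 : G t ≤ φ (x t) - ht t (x (t + 1)) := by
      have := hmin t hT y hyP
      have hyG' : φ (x t) - ht t y = G t := hyG
      linarith
    have h2 : φ (x (t + 1)) ≤ ht t (x (t + 1)) := by
      have := grad_convex_ineq g hg hgd (x t) (x (t + 1))
      rw [hφ, hht]; linarith
    linarith
  have hsum : (∑ t ∈ Finset.range (T + 1), G t) ≤ φ (x 0) - φ xstar := by
    have htel : (∑ t ∈ Finset.range (T + 1), (φ (x t) - φ (x (t + 1))))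
        = φ (x 0) - φ (x (T + 1)) := by
      simpa using Finset.sum_range_sub' (fun t => φ (x t)) (T + 1)
    have h1 : (∑ t ∈ Finset.range (T + 1), G t)
        ≤ ∑ t ∈ Finset.range (T + 1), (φ (x t) - φ (x (t + 1))) := by
      apply Finset.sum_le_sum
      intro i hi
      exact key i (Nat.lt_succ_iff.mp (Finset.mem_range.mp hi))
    have h2 : φ xstar ≤ φ (x (T + 1)) := hstar.2 _ (hxP (T + 1) le_rfl)
    linarith
  have hTpos : (0 : ℝ) < (T + 1 : ℝ) := by positivity
  constructor
  · exact div_le_div_of_nonneg_right hsum hTpos.le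
  · by_contra hcon
    push_neg at hcon
    have : (∑ t ∈ Finset.range (T + 1), ((φ (x 0) - φ xstar) / (T + 1 : ℝ)))
        < ∑ t ∈ Finset.range (T + 1), G t := by
      apply Finset.sum_lt_sum_of_nonempty ⟨0, Finset.mem_range.mpr (Nat.succ_pos T)⟩
      intro i hi
      exact hcon i (Nat.lt_succ_iff.mp (Finset.mem_range.mp hi))
    rw [Finset.sum_const, Finset.card_range] at this
    have heq : (T + 1 : ℕ) • ((φ (x 0) - φ xstar) / (T + 1 : ℝ)) = φ (x 0) - φ xstar := by
      rw [nsmul_eq_mul]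
      field_simp
      push_cast
      ring
    rw [heq] at this
    linarith
end

section
/- If the DCA subproblems are solved inexactly so that h_t(x_{t+1}) - h_t(x) ≤ ε/2 for all x ∈ P and all t, then min_{0≤t≤T} max_{x∈P} { f(x_t) - f(x) - ⟨∇g(x_t), x_t - x⟩ } ≤ (φ(x_0) - φ(x*))/(T+1) + ε/2. -/
open RealInnerProductSpace

lemma grad_ineq {E : Type*} [NormedAddCommGroup E] [InnerProductSpace ℝ E]
    [CompleteSpace E] {g : E → ℝ} (hg : ConvexOn ℝ Set.univ g)
    (hgd : Differentiable ℝ g) (x y : E) :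
    g x + ⟪gradient g x, y - x⟫ ≤ g y := by
  set q : ℝ → ℝ := fun t => g (x + t • (y - x)) with hq
  have hqc : ConvexOn ℝ Set.univ q := by
    have := hg.comp_affineMap (AffineMap.lineMap x y : ℝ →ᵃ[ℝ] E)
    simp only [Set.preimage_univ] at this
    have he : (g ∘ (AffineMap.lineMap x y : ℝ →ᵃ[ℝ] E)) = q := by
      funext t
      simp only [Function.comp_apply, AffineMap.lineMap_apply, q, vadd_eq_add,
        vsub_eq_sub]
      rw [add_comm]
    rwa [he] at this
  have hL : ∀ t : ℝ, HasDerivAt (fun t : ℝ => x + t • (y - x)) (y - x) t := by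
    intro t
    simpa using ((hasDerivAt_id t).smul_const (y - x)).const_add x
  have hqd : ∀ t : ℝ, HasDerivAt q (fderiv ℝ g (x + t • (y - x)) (y - x)) t := by
    intro t
    exact ((hgd _).hasFDerivAt.comp_hasDerivAt t (hL t))
  have hgrad : fderiv ℝ g x (y - x) = ⟪gradient g x, y - x⟫ := by
    have h0 := (hgd x).hasGradientAt
    rw [hasGradientAt_iff_hasFDerivAt] at h0
    rw [h0.fderiv]
    simp [InnerProductSpace.toDual_apply_apply]
  have hslope : deriv q 0 ≤ slope q 0 1 :=
    hqc.deriv_le_slope (Set.mem_univ 0) (Set.mem_univ 1) one_pos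
      ((hqd 0).differentiableAt)
  have hd0 : deriv q 0 = ⟪gradient g x, y - x⟫ := by
    rw [(hqd 0).deriv]; rw [zero_smul, add_zero, hgrad]
  rw [hd0] at hslope
  have : slope q 0 1 = g y - g x := by
    simp [slope, q]
  linarith [hslope, this ▸ hslope]

/-- Inexact DCA with additive error ε/2 per subproblem (Theorem: inexact DCA convergence). -/
theorem stmt4 {n : ℕ} (P : Set (EuclideanSpace ℝ (Fin n)))
    (hPc : IsCompact P) (hPconv : Convex ℝ P)
    (f g : EuclideanSpace ℝ (Fin n) → ℝ)
    (hf : ConvexOn ℝ Set.univ f) (hfd : Differentiable ℝ f)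
    (hg : ConvexOn ℝ Set.univ g) (hgd : Differentiable ℝ g)
    (ε : ℝ) (hε : 0 < ε)
    (T : ℕ) (x : ℕ → EuclideanSpace ℝ (Fin n))
    (hxP : ∀ t ≤ T + 1, x t ∈ P)
    (φ : EuclideanSpace ℝ (Fin n) → ℝ)
    (hφ : ∀ y, φ y = f y - g y)
    (ht : ℕ → EuclideanSpace ℝ (Fin n) → ℝ)
    (hht : ∀ t y, ht t y = f y - g (x t) - ⟪gradient g (x t), y - x t⟫)
    (hinexact : ∀ t ≤ T, ∀ y ∈ P, ht t (x (t + 1)) - ht t y ≤ ε / 2)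
    (G : ℕ → ℝ)
    (hG : ∀ t ≤ T,
      IsGreatest ((fun y => f (x t) - f y - ⟪gradient g (x t), x t - y⟫) '' P) (G t))
    (xstar : EuclideanSpace ℝ (Fin n))
    (hstar : xstar ∈ P ∧ ∀ y ∈ P, φ xstar ≤ φ y) :
    ∃ t ≤ T, G t ≤ (φ (x 0) - φ xstar) / (T + 1 : ℝ) + ε / 2 := by
  -- Step 1: per-step bound
  have key : ∀ t ≤ T, G t ≤ φ (x t) - φ (x (t + 1)) + ε / 2 := by
    intro t htT
    obtain ⟨y, hyP, hy⟩ := (hG t htT).1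
    have hGt : G t = ht t (x t) - ht t y := by
      rw [hht, hht, ← hy]
      have : ⟪gradient g (x t), y - x t⟫ = -⟪gradient g (x t), x t - y⟫ := by
        rw [← inner_neg_right]; congr 1; abel
      rw [this]
      simp only [sub_self, inner_zero_right]
      ring
    have h1 : ht t (x (t + 1)) - ht t y ≤ ε / 2 := hinexact t htT y hyP
    have h2 : ht t (x t) = φ (x t) := by
      rw [hht, hφ]; simp
    have h3 : φ (x (t + 1)) ≤ ht t (x (t + 1)) := by
      rw [hht, hφ]
      have := grad_ineq hg hgd (x t) (x (t + 1))
      linarith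
    linarith [hGt ▸ (by linarith : ht t (x t) - ht t y ≤ φ (x t) - φ (x (t + 1)) + ε / 2)]
  -- Step 2: sum bound
  have hsum : ∑ t ∈ Finset.range (T + 1), G t ≤
      φ (x 0) - φ xstar + (T + 1 : ℝ) * (ε / 2) := by
    have htel : ∑ t ∈ Finset.range (T + 1), (φ (x t) - φ (x (t + 1)) + ε / 2)
        = φ (x 0) - φ (x (T + 1)) + (T + 1 : ℝ) * (ε / 2) := by
      rw [Finset.sum_add_distrib, Finset.sum_range_sub' (fun t => φ (x t))]
      simp [mul_comm]
    have hφstar : φ xstar ≤ φ (x (T + 1)) := hstar.2 _ (hxP (T + 1) le_rfl)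
    calc ∑ t ∈ Finset.range (T + 1), G t
        ≤ ∑ t ∈ Finset.range (T + 1), (φ (x t) - φ (x (t + 1)) + ε / 2) := by
          apply Finset.sum_le_sum
          intro i hi
          exact key i (Nat.lt_succ_iff.mp (Finset.mem_range.mp hi))
      _ = φ (x 0) - φ (x (T + 1)) + (T + 1 : ℝ) * (ε / 2) := htel
      _ ≤ φ (x 0) - φ xstar + (T + 1 : ℝ) * (ε / 2) := by linarith
  -- Step 3: pigeonhole
  by_contra hcon
  push_neg at hcon
  set c : ℝ := (φ (x 0) - φ xstar) / (T + 1 : ℝ) + ε / 2 with hc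
  have hlt : ∀ t ∈ Finset.range (T + 1), c < G t := by
    intro t hti
    exact hcon t (Nat.lt_succ_iff.mp (Finset.mem_range.mp hti))
  have hcard : ∑ _t ∈ Finset.range (T + 1), c < ∑ t ∈ Finset.range (T + 1), G t :=
    Finset.sum_lt_sum_of_nonempty ⟨0, Finset.mem_range.mpr (Nat.succ_pos T)⟩ hlt
  rw [Finset.sum_const, Finset.card_range, nsmul_eq_mul] at hcard
  push_cast at hcard
  have hT1 : (0 : ℝ) < (T + 1 : ℝ) := by positivity
  have heq : ((T : ℝ) + 1) * c = φ (x 0) - φ xstar + ((T : ℝ) + 1) * (ε / 2) := by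
    rw [hc]
    field_simp
  clear_value c
  linarith
end

section
/- Suppose each DCA iterate x_{t+1} ∈ P satisfies the adaptive stopping criterion h_t(x_{t+1}) ≤ φ(x_t) - ⟨∇h_t(x_{t+1}), x_{t+1} - v_{t+1}⟩, where v_{t+1} maximizes ⟨∇h_t(x_{t+1}), x_{t+1} - v⟩ over v ∈ P. Then (1/2)·G(x_t) ≤ φ(x_t) - φ(x_{t+1}) for every t. -/
open RealInnerProductSpace

lemma grad_ineq_s5 {n : ℕ} (F : EuclideanSpace ℝ (Fin n) → ℝ)
    (hF : ConvexOn ℝ Set.univ F) (x y : EuclideanSpace ℝ (Fin n))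
    (hFd : DifferentiableAt ℝ F x) :
    F x + ⟪gradient F x, y - x⟫ ≤ F y := by
  set L : ℝ →ᵃ[ℝ] EuclideanSpace ℝ (Fin n) := AffineMap.lineMap x y
  have hq : ConvexOn ℝ Set.univ (F ∘ L) := by
    have := hF.comp_affineMap L
    simpa using this
  have hL0 : L 0 = x := by simp [L]
  have hL1 : L 1 = y := by simp [L]
  have hder : HasDerivAt (F ∘ L) ⟪gradient F x, y - x⟫ 0 := by
    have hgrad : HasGradientAt F (gradient F x) x := hFd.hasGradientAt
    have hfd' : HasFDerivAt F ((InnerProductSpace.toDual ℝ _) (gradient F x) :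
        EuclideanSpace ℝ (Fin n) →L[ℝ] ℝ) x := hasGradientAt_iff_hasFDerivAt.mp hgrad
    have hLd : HasDerivAt L (y - x) 0 := by
      have := L.hasDerivAt (x := (0:ℝ))
      simpa [L] using this
    rw [← hL0] at hfd'
    have := hfd'.comp_hasDerivAt (0:ℝ) hLd
    simpa [hL0] using this
  have := hq.le_slope_of_hasDerivAt (Set.mem_univ (0:ℝ)) (Set.mem_univ (1:ℝ)) one_pos hder
  rw [slope_def_field] at this
  simp only [Function.comp_apply, hL0, hL1] at this
  have : ⟪gradient F x, y - x⟫ ≤ F y - F x := by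
    simpa [div_one] using this
  linarith


/-- Under the adaptive stopping criterion, half the DC gap lower-bounds the primal progress. -/
theorem stmt5 {n : ℕ} (P : Set (EuclideanSpace ℝ (Fin n)))
    (hPc : IsCompact P) (hPconv : Convex ℝ P)
    (f g : EuclideanSpace ℝ (Fin n) → ℝ)
    (hf : ConvexOn ℝ Set.univ f) (hfd : Differentiable ℝ f)
    (hg : ConvexOn ℝ Set.univ g) (hgd : Differentiable ℝ g)
    (xt xt1 : EuclideanSpace ℝ (Fin n)) (hxt : xt ∈ P) (hxt1 : xt1 ∈ P)
    (φ ht : EuclideanSpace ℝ (Fin n) → ℝ)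
    (hφ : ∀ x, φ x = f x - g x)
    (hht : ∀ x, ht x = f x - g xt - ⟪gradient g xt, x - xt⟫)
    (v : EuclideanSpace ℝ (Fin n))
    (hv : v ∈ P ∧ ∀ w ∈ P,
      ⟪gradient ht xt1, xt1 - w⟫ ≤ ⟪gradient ht xt1, xt1 - v⟫)
    (hcrit : ht xt1 ≤ φ xt - ⟪gradient ht xt1, xt1 - v⟫)
    (G : ℝ)
    (hG : IsGreatest ((fun x => φ xt - ht x) '' P) G) :
    (1 / 2 : ℝ) * G ≤ φ xt - φ xt1 := by
  classical
  -- differentiability of ht at xt1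
  have hhteq : ht = fun x => f x - g xt - ⟪gradient g xt, x - xt⟫ := funext hht
  have hhtd : DifferentiableAt ℝ ht xt1 := by
    rw [hhteq]
    exact ((hfd xt1).sub (differentiableAt_const _)).sub
      (DifferentiableAt.inner ℝ (differentiableAt_const _)
        (differentiableAt_fun_id.sub (differentiableAt_const _)))
  -- convexity of ht
  have hhtconv : ConvexOn ℝ Set.univ ht := by
    refine ⟨convex_univ, ?_⟩
    intro x _ y _ a b ha hb hab
    have hfle := hf.2 (Set.mem_univ x) (Set.mem_univ y) ha hb hab
    have hsum : a • x + b • y - xt = a • (x - xt) + b • (y - xt) := by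
      have : a • x + b • y - xt = a • (x - xt) + b • (y - xt) + ((a + b) - 1) • xt := by
        module
      rw [this, hab]; simp
    have hinner : ⟪gradient g xt, (a • x + b • y) - xt⟫
        = a * ⟪gradient g xt, x - xt⟫ + b * ⟪gradient g xt, y - xt⟫ := by
      rw [hsum, inner_add_right, real_inner_smul_right, real_inner_smul_right]
    have h2 : a * g xt + b * g xt = g xt := by rw [← add_mul, hab, one_mul]
    rw [hht, hht, hht, hinner]
    simp only [smul_eq_mul] at hfle ⊢
    nlinarith [hfle, h2]
  -- g convexity first-order bound: φ xt1 ≤ ht xt1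
  have hglow : g xt + ⟪gradient g xt, xt1 - xt⟫ ≤ g xt1 := grad_ineq_s5 g hg xt xt1 (hgd xt)
  have hphile : φ xt1 ≤ ht xt1 := by
    rw [hφ, hht]; linarith
  -- the maximizer
  obtain ⟨⟨xs, hxs, hxsG⟩, _⟩ := hG
  -- first-order bound for ht at xt1 applied to xs
  have hkey : ht xt1 + ⟪gradient ht xt1, xs - xt1⟫ ≤ ht xs :=
    grad_ineq_s5 ht hhtconv xt1 xs hhtd
  have hflip : ⟪gradient ht xt1, xs - xt1⟫ = -⟪gradient ht xt1, xt1 - xs⟫ := by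
    rw [← inner_neg_right, neg_sub]
  have hvb := hv.2 xs hxs
  rw [hflip] at hkey
  have hGeq : G = φ xt - ht xs := hxsG ▸ rfl
  linarith
end
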